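/- Let G be a finite abelling group and let A be a nonempty subset of G not contained in any proper subgroup of G. If 0 ∈ A, then w_G(A) ≤ ⌈2|G|/|A|⌉ − 1; if 0 ∉ A, then w_G(A) ≤ ⌈2|G|/(|A|+1)⌉. -/

import Mathlib

open scoped Pointwise

/-- `iterSum A k` is the `k`-fold sumset `A + ⋯ + A` (with `iterSum A 0 = {0}`). -/
def iterSum {G : Type*} [AddCommMonoid G] (A : Set G) : ℕ → Set G
  | 0 => {0}
  | k + 1 => iterSum A k + A

/-- The width of `A`: the least positive `k` such that every element of `G` is a sum of
at most `k` elements of `A`. -/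
noncomputable def width {G : Type*} [AddCommMonoid G] (A : Set G) : ℕ :=
  sInf {k : ℕ | 0 < k ∧ ∀ g : G, ∃ j : ℕ, 0 < j ∧ j ≤ k ∧ g ∈ iterSum A j}

set_option linter.unusedSectionVars false
set_option maxHeartbeats 1000000

namespace WidthProof
variable {G : Type*} [AddCommGroup G] [Fintype G] [DecidableEq G] {A S : Finset G}

def IsFrag (A S : Finset G) : Prop := S.Nonempty ∧ S + A ≠ Finset.univ

def fval (A S : Finset G) : ℕ := (S + A).card - S.card

noncomputable def kap (A : Finset G) : ℕ := sInf (fval A '' {S | IsFrag A S})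

noncomputable def msize (A : Finset G) : ℕ :=
  sInf ((fun S : Finset G => S.card) '' {S | IsFrag A S ∧ fval A S = kap A})

lemma subset_add (h0 : (0:G) ∈ A) (S : Finset G) : S ⊆ S + A := by
  intro x hx
  exact Finset.mem_add.2 ⟨x, hx, 0, h0, add_zero x⟩

lemma card_fval (h0 : (0:G) ∈ A) (S : Finset G) : (S + A).card = S.card + fval A S := by
  have := Finset.card_le_card (subset_add h0 S)
  unfold fval; omega

lemma kap_le (hS : IsFrag A S) : kap A ≤ fval A S :=
  Nat.sInf_le ⟨S, hS, rfl⟩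

lemma msize_le (h1 : IsFrag A S) (h2 : fval A S = kap A) : msize A ≤ S.card :=
  Nat.sInf_le ⟨S, ⟨h1, h2⟩, rfl⟩

lemma exists_atom (hex : ∃ S : Finset G, IsFrag A S) :
    ∃ F : Finset G, IsFrag A F ∧ fval A F = kap A ∧ F.card = msize A := by
  obtain ⟨S, hS⟩ := hex
  have h1 : (fval A '' {S | IsFrag A S}).Nonempty := ⟨fval A S, S, hS, rfl⟩
  obtain ⟨S', hS', hv⟩ := Nat.sInf_mem h1
  have h3 : ((fun S : Finset G => S.card) '' {S | IsFrag A S ∧ fval A S = kap A}).Nonempty :=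
    ⟨S'.card, S', ⟨hS', hv⟩, rfl⟩
  obtain ⟨F, ⟨hF1, hF2⟩, hF3⟩ := Nat.sInf_mem h3
  exact ⟨F, hF1, hF2, hF3⟩

lemma ne_univ_of_subset {S T : Finset G} (h : S ⊆ T) (hT : T ≠ Finset.univ) :
    S ≠ Finset.univ := by
  intro h'
  exact hT (Finset.univ_subset_iff.1 (h' ▸ h))

lemma compl_nonempty {S : Finset G} (h : S ≠ Finset.univ) : Sᶜ.Nonempty := by
  rw [Finset.nonempty_iff_ne_empty]
  intro h'
  exact h (by rwa [← Finset.bot_eq_empty, compl_eq_bot, Finset.top_eq_univ] at h')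

lemma zero_mem_neg (h0 : (0:G) ∈ A) : (0:G) ∈ -A := Finset.mem_neg.2 ⟨0, h0, neg_zero⟩

lemma dual (h0 : (0:G) ∈ A) (hS : IsFrag A S) :
    IsFrag (-A) (S + A)ᶜ ∧ fval (-A) (S + A)ᶜ ≤ fval A S := by
  have h0' : (0:G) ∈ -A := zero_mem_neg h0
  have hTne : ((S + A)ᶜ : Finset G).Nonempty := compl_nonempty hS.2
  have hsub : (S + A)ᶜ + -A ⊆ Sᶜ := by
    intro x hx
    obtain ⟨t, ht, b, hb, rfl⟩ := Finset.mem_add.1 hx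
    obtain ⟨a, ha, rfl⟩ := Finset.mem_neg.1 hb
    rw [Finset.mem_compl]
    intro hxS
    exact (Finset.mem_compl.1 ht) (Finset.mem_add.2 ⟨t + -a, hxS, a, ha, by abel⟩)
  have hne : (S + A)ᶜ + -A ≠ Finset.univ := by
    refine ne_univ_of_subset hsub ?_
    intro h'
    obtain ⟨s, hs⟩ := hS.1
    have : s ∈ Sᶜ := h' ▸ Finset.mem_univ s
    exact Finset.mem_compl.1 this hs
  refine ⟨⟨hTne, hne⟩, ?_⟩
  have h1 : ((S + A)ᶜ + -A).card ≤ Sᶜ.card := Finset.card_le_card hsub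
  have h2 : ((S + A)ᶜ : Finset G).card = Fintype.card G - (S + A).card := Finset.card_compl _
  have h3 : Sᶜ.card = Fintype.card G - S.card := Finset.card_compl _
  have h4 : S.card ≤ (S + A).card := Finset.card_le_card (subset_add h0 S)
  have h5 : (S + A).card ≤ Fintype.card G := Finset.card_le_univ _
  have h6 : ((S + A)ᶜ : Finset G) ⊆ (S + A)ᶜ + -A := subset_add h0' _
  have h7 := Finset.card_le_card h6
  unfold fval; omega

lemma frag_dual (h0 : (0:G) ∈ A) (hex : ∃ S : Finset G, IsFrag A S) :
    ∃ T : Finset G, IsFrag (-A) T := by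
  obtain ⟨S, hS⟩ := hex
  exact ⟨(S + A)ᶜ, (dual h0 hS).1⟩

lemma kap_neg_le (h0 : (0:G) ∈ A) (hex : ∃ S : Finset G, IsFrag A S) :
    kap (-A) ≤ kap A := by
  obtain ⟨F, hF, hfv, _⟩ := exists_atom hex
  have := (dual h0 hF).2
  have := kap_le (dual h0 hF).1
  omega

lemma kap_neg (h0 : (0:G) ∈ A) (hex : ∃ S : Finset G, IsFrag A S) :
    kap (-A) = kap A := by
  have h1 := kap_neg_le h0 hex
  have h2 := kap_neg_le (zero_mem_neg h0) (frag_dual h0 hex)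
  rw [neg_neg] at h2
  omega

lemma submod (A S T : Finset G) :
    ((S ∩ T) + A).card + ((S ∪ T) + A).card ≤ (S + A).card + (T + A).card := by
  have h1 : (S ∩ T) + A ⊆ (S + A) ∩ (T + A) := by
    intro x hx
    obtain ⟨y, hy, a, ha, rfl⟩ := Finset.mem_add.1 hx
    rw [Finset.mem_inter] at hy ⊢
    exact ⟨Finset.mem_add.2 ⟨y, hy.1, a, ha, rfl⟩, Finset.mem_add.2 ⟨y, hy.2, a, ha, rfl⟩⟩
  have h2 : (S ∪ T) + A = (S + A) ∪ (T + A) := Finset.union_add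
  calc ((S ∩ T) + A).card + ((S ∪ T) + A).card
      ≤ ((S + A) ∩ (T + A)).card + ((S + A) ∪ (T + A)).card := by
        rw [h2]; exact Nat.add_le_add_right (Finset.card_le_card h1) _
    _ = (S + A).card + (T + A).card := Finset.card_inter_add_card_union _ _

lemma add_singleton_eq (S : Finset G) (d : G) : S + {d} = S.image (· + d) := by
  ext x
  simp only [Finset.mem_add, Finset.mem_image, Finset.mem_singleton]
  constructor
  · rintro ⟨y, hy, z, rfl, rfl⟩; exact ⟨y, hy, rfl⟩
  · rintro ⟨y, hy, rfl⟩; exact ⟨y, hy, d, rfl, rfl⟩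

lemma card_add_singleton (S : Finset G) (d : G) : (S + {d}).card = S.card := by
  rw [add_singleton_eq]
  exact Finset.card_image_of_injective _ (add_left_injective d)

lemma mem_add_singleton_of_mem {F : Finset G} {x : G} (d : G) (h : x ∈ F) : x + d ∈ F + {d} :=
  Finset.mem_add.2 ⟨x, h, d, Finset.mem_singleton_self d, rfl⟩

lemma singleton_zero' : ({(0:G)} : Finset G) = 0 := rfl

lemma add_singleton_zero (F : Finset G) : F + {(0:G)} = F := by
  rw [singleton_zero', add_zero]

lemma add_singleton_neg (F : Finset G) (g : G) (h : F + {g} = F) : F + {-g} = F := by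
  calc F + {-g} = F + {g} + {-g} := by rw [h]
    _ = F + ({g} + {-g}) := add_assoc _ _ _
    _ = F + {(0:G)} := by rw [Finset.singleton_add_singleton, add_neg_cancel]
    _ = F := add_singleton_zero F

lemma halfAux (A : Finset G) (h0 : (0:G) ∈ A)
    (hgen : AddSubgroup.closure (A : Set G) = ⊤)
    (hex : ∃ S : Finset G, IsFrag A S)
    (hm : msize A ≤ msize (-A)) : A.card ≤ 2 * kap A := by
  obtain ⟨F, hF, hfvF, hcF⟩ := exists_atom hex
  have hFAcard : (F + A).card = msize A + kap A := by
    rw [card_fval h0, hfvF, hcF]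
  -- Step 1: translates within F - F fix F
  have htrans : ∀ x ∈ F, ∀ y ∈ F, F + {y - x} = F := by
    intro x hx y hy
    by_contra hne
    set F' := F + {y - x} with hF'def
    have hcF' : F'.card = F.card := card_add_singleton F _
    have hyF' : y ∈ F' := by
      have h := mem_add_singleton_of_mem (y - x) hx
      rwa [show x + (y - x) = y by abel] at h
    have hF'A : F' + A = (F + A) + {y - x} := add_right_comm _ _ _
    have hF'Acard : (F' + A).card = (F + A).card := by rw [hF'A, card_add_singleton]
    have hF'frag : IsFrag A F' := by
      refine ⟨⟨y, hyF'⟩, ?_⟩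
      intro hU
      apply hF.2
      apply (Finset.card_eq_iff_eq_univ _).1
      rw [← hF'Acard, hU, Finset.card_univ]
    have hfvF' : fval A F' = kap A := by
      show (F' + A).card - F'.card = kap A
      rw [hF'Acard, hcF']
      exact hfvF
    have hRne : (F ∩ F').Nonempty := ⟨y, Finset.mem_inter.2 ⟨hy, hyF'⟩⟩
    have hRpos : 0 < (F ∩ F').card := hRne.card_pos
    have hRsub : F ∩ F' ⊆ F := Finset.inter_subset_left
    have hRAsub : (F ∩ F') + A ⊆ F + A := Finset.add_subset_add_right hRsub
    have hRfrag : IsFrag A (F ∩ F') := ⟨hRne, ne_univ_of_subset hRAsub hF.2⟩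
    have hRcard : (F ∩ F').card < F.card := by
      refine Finset.card_lt_card ⟨hRsub, ?_⟩
      intro hsub
      have hFF' : F ⊆ F' := fun z hz => (Finset.mem_inter.1 (hsub hz)).2
      exact hne (Finset.eq_of_subset_of_card_le hFF' (le_of_eq hcF')).symm
    have hRfval : (F ∩ F').card + kap A + 1 ≤ ((F ∩ F') + A).card := by
      have h1 := kap_le hRfrag
      have h2 := card_fval h0 (F ∩ F')
      rcases eq_or_lt_of_le h1 with heq | hlt
      · exfalso
        have := msize_le hRfrag heq.symm
        omega
      · omega
    have hsub2 := submod A F F'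
    by_cases hU2 : (F ∪ F') + A = Finset.univ
    · have hdual := dual h0 hF
      have hkneg := kap_neg h0 hex
      have hge : kap (-A) ≤ fval (-A) (F + A)ᶜ := kap_le hdual.1
      have hle : fval (-A) (F + A)ᶜ ≤ kap A := hdual.2.trans_eq hfvF
      have h1 : fval (-A) (F + A)ᶜ = kap (-A) := by omega
      have hm2 : msize (-A) ≤ ((F + A)ᶜ).card := msize_le hdual.1 h1
      have h2 : ((F + A)ᶜ).card = Fintype.card G - (F + A).card := Finset.card_compl _
      have h3 : (F + A).card ≤ Fintype.card G := Finset.card_le_univ _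
      have h4 : ((F ∪ F') + A).card = Fintype.card G := by rw [hU2, Finset.card_univ]
      omega
    · have hUfrag : IsFrag A (F ∪ F') := ⟨⟨y, Finset.mem_union_left _ hy⟩, hU2⟩
      have hU3 := kap_le hUfrag
      have hU4 := card_fval h0 (F ∪ F')
      have hcardRU : (F ∩ F').card + (F ∪ F').card = F.card + F'.card :=
        Finset.card_inter_add_card_union F F'
      omega
  -- Step 2: either some translate a + F is disjoint from F, or F is the whole group
  by_cases hall : ∀ a ∈ A, ¬ Disjoint (F + {a}) F
  · exfalso
    have hstab : ∀ a ∈ A, F + {a} = F := by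
      intro a ha
      obtain ⟨z, hz1, hz2⟩ := Finset.not_disjoint_iff.1 (hall a ha)
      obtain ⟨w, hw, b, hb, rfl⟩ := Finset.mem_add.1 hz1
      rw [Finset.mem_singleton] at hb
      rw [← hb, show b = (w + b) - w by abel]
      exact htrans w hw (w + b) hz2
    set St : AddSubgroup G :=
      { carrier := {g : G | F + {g} = F}
        zero_mem' := add_singleton_zero F
        add_mem' := by
          intro g h hg hh
          show F + {g + h} = F
          rw [← Finset.singleton_add_singleton, ← add_assoc]
          show (F + {g}) + {h} = F
          rw [show F + {g} = F from hg]
          exact hh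
        neg_mem' := fun {g} hg => add_singleton_neg F g hg } with hSt
    have hA_St : (A : Set G) ⊆ (St : Set G) := fun a ha => hstab a ha
    have htop : (⊤ : AddSubgroup G) ≤ St := by
      rw [← hgen]
      exact (AddSubgroup.closure_le St).2 hA_St
    obtain ⟨x₀, hx₀⟩ := hF.1
    have hFuniv : F = Finset.univ := by
      apply Finset.eq_univ_of_forall
      intro g
      have hg : F + {g - x₀} = F := htop (AddSubgroup.mem_top (g - x₀))
      have h := mem_add_singleton_of_mem (g - x₀) hx₀
      rw [show x₀ + (g - x₀) = g by abel] at h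
      rwa [hg] at h
    exact hF.2 (Finset.univ_subset_iff.1 (hFuniv ▸ subset_add h0 F))
  · push_neg at hall
    obtain ⟨a, ha, hdisj⟩ := hall
    have h1 : F + {a} ⊆ F + A := Finset.add_subset_add_left (Finset.singleton_subset_iff.2 ha)
    have h3 : (F + {a}) ∪ F ⊆ F + A := Finset.union_subset h1 (subset_add h0 F)
    have h4 := Finset.card_le_card h3
    have h5 : ((F + {a}) ∪ F).card = (F + {a}).card + F.card := Finset.card_union_of_disjoint hdisj
    have h6 := card_add_singleton F a
    obtain ⟨x₀, hx₀⟩ := hF.1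
    have h7 : A + {x₀} ⊆ F + A := by
      rw [add_comm A ({x₀} : Finset G)]
      exact Finset.add_subset_add_right (Finset.singleton_subset_iff.2 hx₀)
    have h8 := card_add_singleton A x₀
    have h9 := Finset.card_le_card h7
    omega

lemma card_half (A : Finset G) (h0 : (0:G) ∈ A)
    (hgen : AddSubgroup.closure (A : Set G) = ⊤)
    (S : Finset G) (hS : IsFrag A S) : A.card ≤ 2 * fval A S := by
  have hex : ∃ S : Finset G, IsFrag A S := ⟨S, hS⟩
  have hk := kap_le hS
  rcases le_total (msize A) (msize (-A)) with hm | hm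
  · have := halfAux A h0 hgen hex hm
    omega
  · have h0' : (0:G) ∈ -A := zero_mem_neg h0
    have hgen' : AddSubgroup.closure ((-A : Finset G) : Set G) = ⊤ := by
      rw [Finset.coe_neg, AddSubgroup.closure_neg]
      exact hgen
    have hex' := frag_dual h0 hex
    have hm' : msize (-A) ≤ msize (-(-A)) := by rwa [neg_neg]
    have h := halfAux (-A) h0' hgen' hex' hm'
    rw [kap_neg h0 hex] at h
    have hcard : (-A).card = A.card := Finset.card_neg A
    omega

lemma key (A : Finset G) (h0 : (0:G) ∈ A)
    (hgen : AddSubgroup.closure (A : Set G) = ⊤)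
    (S : Finset G) (hS : S.Nonempty) (hne : S + A ≠ Finset.univ) :
    2 * S.card + A.card ≤ 2 * (S + A).card := by
  have h := card_half A h0 hgen S ⟨hS, hne⟩
  have h2 := card_fval h0 S
  omega

def finIter (A : Finset G) : ℕ → Finset G
  | 0 => {0}
  | k + 1 => finIter A k + A

lemma coe_finIter (A : Finset G) (k : ℕ) :
    ((finIter A k : Finset G) : Set G) = iterSum (A : Set G) k := by
  induction k with
  | zero => simp [finIter, iterSum]
  | succ k ih => simp [finIter, iterSum, Finset.coe_add, ih]

lemma finIter_nonempty {A : Finset G} (h0 : (0:G) ∈ A) (k : ℕ) :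
    (finIter A k).Nonempty := by
  induction k with
  | zero => exact ⟨0, Finset.mem_singleton_self 0⟩
  | succ k ih =>
      obtain ⟨x, hx⟩ := ih
      exact ⟨x + 0, Finset.mem_add.2 ⟨x, hx, 0, h0, rfl⟩⟩

lemma growth (A : Finset G) (h0 : (0:G) ∈ A)
    (hgen : AddSubgroup.closure (A : Set G) = ⊤) :
    ∀ k, 1 ≤ k → finIter A k = Finset.univ ∨ (k+1) * A.card ≤ 2 * (finIter A k).card := by
  intro k
  induction k with
  | zero => omega
  | succ k ih =>
    intro _
    by_cases hu : finIter A (k+1) = Finset.univ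
    · exact Or.inl hu
    right
    rcases Nat.eq_zero_or_pos k with rfl | hk
    · have h1 : (finIter A (0+1)).card = A.card := by
        show (({0} : Finset G) + A).card = A.card
        rw [show ({(0:G)} : Finset G) = 0 from rfl, zero_add]
      omega
    · have hstep : finIter A (k+1) = finIter A k + A := rfl
      have hne : finIter A k + A ≠ Finset.univ := by rw [← hstep]; exact hu
      have hknu : finIter A k ≠ Finset.univ := by
        intro h
        apply hne
        apply Finset.univ_subset_iff.1
        calc Finset.univ = finIter A k := h.symm
          _ ⊆ finIter A k + A := subset_add h0 _
      rcases ih hk with h | h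
      · exact absurd h hknu
      · have hkey := key A h0 hgen (finIter A k) (finIter_nonempty h0 k) hne
        have hmul : (k+1+1) * A.card = (k+1) * A.card + A.card := by ring
        rw [hstep]
        omega

lemma covers (A : Finset G) (h0 : (0:G) ∈ A)
    (hgen : AddSubgroup.closure (A : Set G) = ⊤) (k : ℕ) (hk1 : 1 ≤ k)
    (hk : 2 * Fintype.card G ≤ (k+1) * A.card) : finIter A k = Finset.univ := by
  rcases growth A h0 hgen k hk1 with h | h
  · exact h
  · apply (Finset.card_eq_iff_eq_univ _).1
    have := Finset.card_le_univ (finIter A k)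
    omega

lemma dropZero (A : Finset G) :
    ∀ j, ∀ x ∈ finIter (insert (0:G) A) j, ∃ i ≤ j, x ∈ finIter A i := by
  intro j
  induction j with
  | zero => intro x hx; exact ⟨0, le_refl 0, hx⟩
  | succ j ih =>
    intro x hx
    obtain ⟨y, hy, b, hb, rfl⟩ := Finset.mem_add.1 hx
    obtain ⟨i, hi, hyi⟩ := ih y hy
    rcases Finset.mem_insert.1 hb with rfl | hbA
    · exact ⟨i, le_trans hi (Nat.le_succ j), by rwa [add_zero]⟩
    · exact ⟨i + 1, by omega, Finset.mem_add.2 ⟨y, hyi, b, hbA, rfl⟩⟩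

lemma width_le (A : Set G) (k : ℕ) (hk : 0 < k)
    (h : ∀ g : G, ∃ j : ℕ, 0 < j ∧ j ≤ k ∧ g ∈ iterSum A j) : width A ≤ k :=
  Nat.sInf_le ⟨hk, h⟩

lemma finIter_succ (A : Finset G) (k : ℕ) : finIter A (k+1) = finIter A k + A := rfl

end WidthProof

open WidthProof in
theorem width_upper_bound (G : Type*) [AddCommGroup G] [Fintype G] (A : Set G)
    (hA : A.Nonempty) (hgen : ∀ H : AddSubgroup G, A ⊆ ↑H → H = ⊤) :
    ((0 : G) ∈ A → (width A : ℤ) ≤ ⌈(2 * Fintype.card G : ℚ) / (A.ncard : ℚ)⌉ - 1) ∧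
    ((0 : G) ∉ A → (width A : ℤ) ≤ ⌈(2 * Fintype.card G : ℚ) / ((A.ncard : ℚ) + 1)⌉) := by
  classical
  have hfin : A.Finite := Set.toFinite A
  set Af : Finset G := hfin.toFinset with hAfdef
  have hcoe : (Af : Set G) = A := hfin.coe_toFinset
  have hncard : A.ncard = Af.card := by
    rw [← hcoe, Set.ncard_coe_finset]
  have hAfne : Af.Nonempty := by
    obtain ⟨x, hx⟩ := hA
    exact ⟨x, hfin.mem_toFinset.2 hx⟩
  have hnpos : 0 < Fintype.card G := Fintype.card_pos
  have hapos : 0 < Af.card := hAfne.card_pos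
  have han : Af.card ≤ Fintype.card G := Finset.card_le_univ Af
  constructor
  · -- case 0 ∈ A
    intro h0
    have h0f : (0:G) ∈ Af := hfin.mem_toFinset.2 h0
    have hgenf : AddSubgroup.closure (Af : Set G) = ⊤ := by
      rw [hcoe]
      exact hgen _ AddSubgroup.subset_closure
    set c : ℤ := ⌈(2 * Fintype.card G : ℚ) / (A.ncard : ℚ)⌉ with hcdef
    have hq : (0:ℚ) < (A.ncard : ℚ) := by
      rw [hncard]; exact_mod_cast hapos
    have hc2 : 2 ≤ c := by
      have h1 : (2:ℚ) ≤ (2 * Fintype.card G : ℚ) / (A.ncard : ℚ) := by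
        rw [le_div_iff₀ hq, hncard]
        have h2 : (Af.card:ℚ) ≤ (Fintype.card G : ℚ) := Nat.cast_le.2 han
        push_cast
        linarith
      calc (2:ℤ) = ⌈(2:ℚ)⌉ := by norm_num
        _ ≤ c := Int.ceil_le_ceil h1
    have hcmul : 2 * (Fintype.card G : ℤ) ≤ c * Af.card := by
      have h1 : (2 * Fintype.card G : ℚ) / (A.ncard : ℚ) ≤ (c:ℚ) := Int.le_ceil _
      rw [div_le_iff₀ hq, hncard] at h1
      exact_mod_cast h1
    set k : ℕ := c.toNat - 1 with hkdef
    have hceq : c = (k : ℤ) + 1 := by omega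
    have hk1 : 1 ≤ k := by omega
    have hknat : 2 * Fintype.card G ≤ (k+1) * Af.card := by
      have h2 := hcmul
      rw [hceq] at h2
      exact_mod_cast h2
    have huniv := covers Af h0f hgenf k hk1 hknat
    have hwk : width A ≤ k := by
      apply width_le A k (by omega)
      intro g
      refine ⟨k, by omega, le_refl k, ?_⟩
      rw [← hcoe, ← coe_finIter, huniv]
      simp
    have hwz : (width A : ℤ) ≤ (k : ℤ) := by exact_mod_cast hwk
    omega
  · -- case 0 ∉ A
    intro h0
    have h0f : (0:G) ∉ Af := fun h => h0 (hfin.mem_toFinset.1 h)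
    set B : Finset G := insert (0:G) Af with hBdef
    have hB0 : (0:G) ∈ B := Finset.mem_insert_self 0 Af
    have hBcard : B.card = Af.card + 1 := Finset.card_insert_of_notMem h0f
    have hgenB : AddSubgroup.closure (B : Set G) = ⊤ := by
      apply hgen
      refine subset_trans ?_ AddSubgroup.subset_closure
      rw [← hcoe]
      intro x hx
      simp only [hBdef, Finset.coe_insert, Set.mem_insert_iff]
      exact Or.inr hx
    have han2 : Af.card + 1 ≤ Fintype.card G := by
      have hsub : Af ⊆ Finset.univ.erase 0 := fun x hx =>
        Finset.mem_erase.2 ⟨fun h => h0f (h ▸ hx), Finset.mem_univ x⟩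
      have h1 := Finset.card_le_card hsub
      rw [Finset.card_erase_of_mem (Finset.mem_univ 0), Finset.card_univ] at h1
      omega
    set c : ℤ := ⌈(2 * Fintype.card G : ℚ) / ((A.ncard : ℚ) + 1)⌉ with hcdef
    have hq : (0:ℚ) < (A.ncard : ℚ) + 1 := by positivity
    have hc2 : 2 ≤ c := by
      have h1 : (1:ℚ) < (2 * Fintype.card G : ℚ) / ((A.ncard : ℚ) + 1) := by
        rw [lt_div_iff₀ hq, hncard]
        have h2 : ((Af.card : ℚ) + 1) ≤ (Fintype.card G : ℚ) := by exact_mod_cast han2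
        have h3 : (1:ℚ) ≤ (Fintype.card G : ℚ) := by exact_mod_cast hnpos
        push_cast
        linarith
      have h4 : (1:ℤ) < c := Int.lt_ceil.2 (by exact_mod_cast h1)
      omega
    have hcmul : 2 * (Fintype.card G : ℤ) ≤ c * (Af.card + 1) := by
      have h1 : (2 * Fintype.card G : ℚ) / ((A.ncard : ℚ) + 1) ≤ (c:ℚ) := Int.le_ceil _
      rw [div_le_iff₀ hq, hncard] at h1
      exact_mod_cast h1
    set k : ℕ := c.toNat - 1 with hkdef
    have hceq : c = (k : ℤ) + 1 := by omega
    have hk1 : 1 ≤ k := by omega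
    have hknat : 2 * Fintype.card G ≤ (k+1) * B.card := by
      rw [hBcard]
      have h2 := hcmul
      rw [hceq] at h2
      exact_mod_cast h2
    have huniv := covers B hB0 hgenB k hk1 hknat
    obtain ⟨a₀, ha₀⟩ := hAfne
    have hwk : width A ≤ k + 1 := by
      apply width_le A (k+1) (by omega)
      intro g
      have hg : g - a₀ ∈ finIter B k := by rw [huniv]; exact Finset.mem_univ _
      obtain ⟨i, hi, hgi⟩ := dropZero Af k (g - a₀) hg
      refine ⟨i + 1, by omega, by omega, ?_⟩
      rw [← hcoe, ← coe_finIter]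
      have : g ∈ finIter Af (i+1) := by
        rw [finIter_succ]
        exact Finset.mem_add.2 ⟨g - a₀, hgi, a₀, ha₀, sub_add_cancel g a₀⟩
      exact this
    have hwz : (width A : ℤ) ≤ (k : ℤ) + 1 := by exact_mod_cast hwk
    omega
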